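/- Let M be a deterministic program with high-security input H, low-security input L, and low-security output O, and let μ be a probability distribution on ℍ × 𝕃 with μ(h,ℓ) > 0 for all h ∈ ℍ and ℓ ∈ 𝕃. Then M is non-interferent if and only if SE[μ](M) ≤ 0. -/

import Mathlib

/-!
Statement 0: For a deterministic program `M : ℍ × 𝕃 → 𝕆` and a probability
distribution `μ` on `ℍ × 𝕃` with `μ(h,ℓ) > 0` everywhere, `M` is non-interferent
iff `SE[μ](M) ≤ 0`, where `SE[μ](M) = 𝓗[μ](H|L) − 𝓗[μ](H|O,L)`.
-/

/-- `p · log₂(1/p)`, one summand of the Shannon entropy. -/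
noncomputable def entTerm (p : ℝ) : ℝ := p * Real.logb 2 (1 / p)

variable {Hi Li Oi : Type*}

/-- Marginal probability `μ(L = ℓ)`. -/
noncomputable def pL [Fintype Hi] (μ : Hi × Li → ℝ) (ℓ : Li) : ℝ := ∑ h, μ (h, ℓ)

/-- Joint probability `μ(O = o, L = ℓ)` where `O = M(H,L)`. -/
noncomputable def pOL [Fintype Hi] [DecidableEq Oi] (M : Hi × Li → Oi) (μ : Hi × Li → ℝ)
    (o : Oi) (ℓ : Li) : ℝ := ∑ h, if M (h, ℓ) = o then μ (h, ℓ) else 0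

/-- Conditional Shannon entropy `𝓗[μ](H|L) = Σ_ℓ μ(L=ℓ) · 𝓗[μ](H|L=ℓ)`. -/
noncomputable def condEntHL [Fintype Hi] [Fintype Li] (μ : Hi × Li → ℝ) : ℝ :=
  ∑ ℓ : Li, pL μ ℓ * ∑ h : Hi, entTerm (μ (h, ℓ) / pL μ ℓ)

/-- Conditional Shannon entropy `𝓗[μ](H|O,L)` where `O = M(H,L)`. -/
noncomputable def condEntHOL [Fintype Hi] [Fintype Li] [Fintype Oi] [DecidableEq Oi]
    (M : Hi × Li → Oi) (μ : Hi × Li → ℝ) : ℝ :=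
  ∑ ℓ : Li, ∑ o : Oi,
    pOL M μ o ℓ * ∑ h : Hi, entTerm ((if M (h, ℓ) = o then μ (h, ℓ) else 0) / pOL M μ o ℓ)

/-- Shannon-entropy-based quantitative information flow
`SE[μ](M) = 𝓗[μ](H|L) − 𝓗[μ](H|O,L)`. -/
noncomputable def SE [Fintype Hi] [Fintype Li] [Fintype Oi] [DecidableEq Oi]
    (M : Hi × Li → Oi) (μ : Hi × Li → ℝ) : ℝ :=
  condEntHL μ - condEntHOL M μ

lemma entTerm_zero : entTerm 0 = 0 := by simp [entTerm]

lemma mul_entTerm_div (a b : ℝ) (ha : a ≠ 0) :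
    a * entTerm (b / a) = b * Real.logb 2 (a / b) := by
  unfold entTerm
  rw [one_div_div, ← mul_assoc]
  congr 1
  field_simp

/-- chain rule, single conditioning value -/
lemma chain {Hi Oi : Type*} [Fintype Hi] [Fintype Oi] [DecidableEq Oi] [Nonempty Hi]
    (f : Hi → Oi) (q : Hi → ℝ) (hq : ∀ h, 0 < q h) :
    (∑ h, q h) * ∑ h, entTerm (q h / ∑ h', q h') =
      (∑ o, (∑ h, if f h = o then q h else 0) *
          ∑ h, entTerm ((if f h = o then q h else 0) / ∑ h', if f h' = o then q h' else 0)) +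
        ∑ o, (∑ h, if f h = o then q h else 0) *
          Real.logb 2 ((∑ h', q h') / ∑ h, if f h = o then q h else 0) := by
  set P : ℝ := ∑ h, q h with hPdef
  set r : Oi → ℝ := fun o => ∑ h, if f h = o then q h else 0 with hrdef
  have hP0 : 0 < P := Finset.sum_pos (fun h _ => hq h) Finset.univ_nonempty
  have hqr : ∀ h, q h ≤ r (f h) := by
    intro h
    have := Finset.single_le_sum (f := fun h' => if f h' = f h then q h' else 0)
      (fun h' _ => by split; exacts [(hq _).le, le_refl 0]) (Finset.mem_univ h)
    simpa using this
  have hr0 : ∀ h, 0 < r (f h) := fun h => lt_of_lt_of_le (hq h) (hqr h)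
  have L1 : P * ∑ h, entTerm (q h / P) = ∑ h, q h * Real.logb 2 (P / q h) := by
    rw [Finset.mul_sum]
    exact Finset.sum_congr rfl fun h _ => mul_entTerm_div _ _ hP0.ne'
  have R1 : (∑ o, r o * ∑ h, entTerm ((if f h = o then q h else 0) / r o)) =
      ∑ h, q h * Real.logb 2 (r (f h) / q h) := by
    simp_rw [Finset.mul_sum]
    rw [Finset.sum_comm]
    refine Finset.sum_congr rfl fun h _ => ?_
    rw [Finset.sum_eq_single (f h)]
    · rw [if_pos rfl]
      exact mul_entTerm_div _ _ (hr0 h).ne'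
    · intro o _ ho
      rw [if_neg (fun hh => ho hh.symm), zero_div, entTerm_zero, mul_zero]
    · intro h'; exact absurd (Finset.mem_univ _) h'
  have R2 : (∑ o, r o * Real.logb 2 (P / r o)) = ∑ h, q h * Real.logb 2 (P / r (f h)) := by
    have step : ∀ o, r o * Real.logb 2 (P / r o) =
        ∑ h, (if f h = o then q h else 0) * Real.logb 2 (P / r o) := by
      intro o
      rw [← Finset.sum_mul]
    simp_rw [step]
    rw [Finset.sum_comm]
    refine Finset.sum_congr rfl fun h _ => ?_
    rw [Finset.sum_eq_single (f h)]
    · rw [if_pos rfl]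
    · intro o _ ho
      rw [if_neg (fun hh => ho hh.symm), zero_mul]
    · intro h'; exact absurd (Finset.mem_univ _) h'
  rw [L1, R1, R2, ← Finset.sum_add_distrib]
  refine Finset.sum_congr rfl fun h _ => ?_
  have hq0 : q h ≠ 0 := (hq h).ne'
  have hr0' : r (f h) ≠ 0 := (hr0 h).ne'
  have key : P / q h = (r (f h) / q h) * (P / r (f h)) := by
    field_simp
  rw [key, Real.logb_mul (by positivity) (by positivity), mul_add]

lemma SE_eq [Fintype Hi] [Fintype Li] [Fintype Oi] [DecidableEq Oi] [Nonempty Hi]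
    (M : Hi × Li → Oi) (μ : Hi × Li → ℝ) (hpos : ∀ x, 0 < μ x) :
    SE M μ = ∑ ℓ : Li, ∑ o : Oi, pOL M μ o ℓ * Real.logb 2 (pL μ ℓ / pOL M μ o ℓ) := by
  unfold SE condEntHL condEntHOL
  rw [← Finset.sum_sub_distrib]
  refine Finset.sum_congr rfl fun ℓ _ => ?_
  have := chain (fun h => M (h, ℓ)) (fun h => μ (h, ℓ)) (fun h => hpos _)
  have e : pL μ ℓ = ∑ h, μ (h, ℓ) := rfl
  have e2 : ∀ o, pOL M μ o ℓ = ∑ h, if M (h, ℓ) = o then μ (h, ℓ) else 0 := fun o => rfl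
  simp only [pL, pOL]
  linarith [this]


/-- A program is non-interferent iff `SE[μ](M) ≤ 0` (for any everywhere-positive
distribution `μ`). -/
theorem noninterferent_iff_SE_le_zero
    [Fintype Hi] [Fintype Li] [Fintype Oi] [DecidableEq Oi] [Nonempty Hi] [Nonempty Li]
    (M : Hi × Li → Oi) (μ : Hi × Li → ℝ)
    (hpos : ∀ x, 0 < μ x) (hsum : ∑ x, μ x = 1) :
    (∀ (h h' : Hi) (ℓ : Li), M (h, ℓ) = M (h', ℓ)) ↔ SE M μ ≤ 0 := by
  have hpL : ∀ ℓ, 0 < pL μ ℓ :=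
    fun ℓ => Finset.sum_pos (fun h _ => hpos _) Finset.univ_nonempty
  have hpOL_nonneg : ∀ o ℓ, 0 ≤ pOL M μ o ℓ := by
    intro o ℓ
    refine Finset.sum_nonneg fun h _ => ?_
    split; exacts [(hpos _).le, le_refl 0]
  have hpOL_le : ∀ o ℓ, pOL M μ o ℓ ≤ pL μ ℓ := by
    intro o ℓ
    refine Finset.sum_le_sum fun h _ => ?_
    split; exacts [le_refl _, (hpos _).le]
  have hterm_nonneg : ∀ o ℓ, 0 ≤ pOL M μ o ℓ * Real.logb 2 (pL μ ℓ / pOL M μ o ℓ) := by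
    intro o ℓ
    rcases eq_or_lt_of_le (hpOL_nonneg o ℓ) with h0 | h0
    · rw [← h0, zero_mul]
    · refine mul_nonneg h0.le (Real.logb_nonneg one_lt_two ?_)
      rw [le_div_iff₀ h0, one_mul]
      exact hpOL_le o ℓ
  rw [SE_eq M μ hpos]
  constructor
  · intro hni
    have : ∀ ℓ ∈ Finset.univ, (∑ o : Oi, pOL M μ o ℓ * Real.logb 2 (pL μ ℓ / pOL M μ o ℓ)) = 0 := by
      intro ℓ _
      refine Finset.sum_eq_zero fun o _ => ?_
      by_cases hex : ∃ h : Hi, M (h, ℓ) = o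
      · obtain ⟨h, hh⟩ := hex
        have : pOL M μ o ℓ = pL μ ℓ := by
          unfold pOL pL
          refine Finset.sum_congr rfl fun h' _ => ?_
          rw [if_pos ((hni h' h ℓ).trans hh)]
        rw [this, div_self (hpL ℓ).ne', Real.logb_one, mul_zero]
      · have : pOL M μ o ℓ = 0 := by
          refine Finset.sum_eq_zero fun h' _ => ?_
          rw [if_neg (fun hc => hex ⟨h', hc⟩)]
        rw [this, zero_mul]
    rw [Finset.sum_eq_zero this]
  · intro hse
    by_contra hni
    push_neg at hni
    obtain ⟨h, h', ℓ, hne⟩ := hni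
    have hlt : pOL M μ (M (h, ℓ)) ℓ < pL μ ℓ := by
      unfold pOL pL
      refine Finset.sum_lt_sum (fun h'' _ => ?_) ⟨h', Finset.mem_univ h', ?_⟩
      · split; exacts [le_refl _, (hpos _).le]
      · rw [if_neg (fun hc => hne hc.symm)]
        exact hpos _
    have hgt : 0 < pOL M μ (M (h, ℓ)) ℓ := by
      have := Finset.single_le_sum
        (f := fun h'' => if M (h'', ℓ) = M (h, ℓ) then μ (h'', ℓ) else 0)
        (fun h'' _ => by split; exacts [(hpos _).le, le_refl 0]) (Finset.mem_univ h)
      simp only [if_pos rfl] at this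
      exact lt_of_lt_of_le (hpos _) this
    have hpos_term : 0 < pOL M μ (M (h, ℓ)) ℓ *
        Real.logb 2 (pL μ ℓ / pOL M μ (M (h, ℓ)) ℓ) := by
      refine mul_pos hgt (Real.logb_pos one_lt_two ?_)
      rw [lt_div_iff₀ hgt, one_mul]
      exact hlt
    have hsum_pos : 0 < ∑ ℓ' : Li, ∑ o : Oi, pOL M μ o ℓ' *
        Real.logb 2 (pL μ ℓ' / pOL M μ o ℓ') := by
      refine Finset.sum_pos' (fun ℓ' _ => Finset.sum_nonneg fun o _ => hterm_nonneg o ℓ')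
        ⟨ℓ, Finset.mem_univ ℓ, ?_⟩
      exact Finset.sum_pos' (fun o _ => hterm_nonneg o ℓ) ⟨M (h, ℓ), Finset.mem_univ _, hpos_term⟩
    linarith
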